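/- Let n ≥ 2, let U ⊆ ℝⁿ be open, let f : U → ℝ be a positive C³ function and let u : U → ℝ be a C³ function satisfying the torsion-type equation Δu = −1 + (Δf/f)·u on U. Define the vector field X : U → ℝⁿ by X = f·∇(|∇u|²) + (2/n)·f·∇u − (Hess f)·∇(u²) − (2/n)·u·∇f − 2u·(Hess u)·∇f + (2u²/f)·(Hess f)·∇f. Then at every point of U one has div X = 2f·‖Hess u − (Δu/n)·Iₙ − (u/f)·(Hess f − (Δf/n)·Iₙ)‖_F² + 2·(∇u − (u/f)·∇f)ᵀ · Q · (∇u − (u/f)·∇f), where Q = (Δf)·Iₙ − Hess f. -/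

import Mathlib

open scoped BigOperators

/-- Partial derivative `∂ᵢ v` of a scalar function on `ℝⁿ = Fin n → ℝ`. -/
noncomputable def pd {n : ℕ} (i : Fin n) (v : (Fin n → ℝ) → ℝ) (x : Fin n → ℝ) : ℝ :=
  fderiv ℝ v x (Pi.single i 1)

/-- Gradient `∇v`. -/
noncomputable def grad {n : ℕ} (v : (Fin n → ℝ) → ℝ) (x : Fin n → ℝ) : Fin n → ℝ :=
  fun i => pd i v x

/-- Hessian matrix `(∂ᵢ∂ⱼ v)ᵢⱼ`. -/
noncomputable def hess {n : ℕ} (v : (Fin n → ℝ) → ℝ) (x : Fin n → ℝ) :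
    Matrix (Fin n) (Fin n) ℝ :=
  fun i j => pd i (fun y => pd j v y) x

/-- Laplacian `Δv = tr (Hess v)`. -/
noncomputable def lap {n : ℕ} (v : (Fin n → ℝ) → ℝ) (x : Fin n → ℝ) : ℝ :=
  ∑ i, hess v x i i

/-- Divergence of a vector field. -/
noncomputable def divg {n : ℕ} (X : (Fin n → ℝ) → (Fin n → ℝ)) (x : Fin n → ℝ) : ℝ :=
  ∑ i, pd i (fun y => X y i) x

/-- Euclidean inner product. -/
def dotp {n : ℕ} (a b : Fin n → ℝ) : ℝ := ∑ i, a i * b i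

/-- Frobenius inner product of matrices. -/
def frobInner {n : ℕ} (A B : Matrix (Fin n) (Fin n) ℝ) : ℝ := ∑ i, ∑ j, A i j * B i j

/-- Squared Frobenius norm of a matrix. -/
def frobSq {n : ℕ} (A : Matrix (Fin n) (Fin n) ℝ) : ℝ := ∑ i, ∑ j, (A i j) ^ 2


section Infra


variable {n : ℕ} {U : Set (Fin n → ℝ)} {x : Fin n → ℝ}

lemma pd_congr {i : Fin n} {v w : (Fin n → ℝ) → ℝ}
    (h : ∀ᶠ y in nhds x, v y = w y) : pd i v x = pd i w x := by
  unfold pd; rw [Filter.EventuallyEq.fderiv_eq h]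

lemma pd_add {i : Fin n} {v w : (Fin n → ℝ) → ℝ}
    (hv : DifferentiableAt ℝ v x) (hw : DifferentiableAt ℝ w x) :
    pd i (fun y => v y + w y) x = pd i v x + pd i w x := by
  unfold pd; rw [fderiv_fun_add hv hw]; rfl

lemma pd_sub {i : Fin n} {v w : (Fin n → ℝ) → ℝ}
    (hv : DifferentiableAt ℝ v x) (hw : DifferentiableAt ℝ w x) :
    pd i (fun y => v y - w y) x = pd i v x - pd i w x := by
  unfold pd; rw [fderiv_fun_sub hv hw]; rfl

lemma pd_mul {i : Fin n} {v w : (Fin n → ℝ) → ℝ}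
    (hv : DifferentiableAt ℝ v x) (hw : DifferentiableAt ℝ w x) :
    pd i (fun y => v y * w y) x = pd i v x * w x + v x * pd i w x := by
  unfold pd; rw [fderiv_fun_mul hv hw]; simp; ring

lemma pd_const {i : Fin n} (c : ℝ) : pd i (fun _ => c) x = 0 := by
  unfold pd; simp

lemma pd_cmul {i : Fin n} {v : (Fin n → ℝ) → ℝ} (c : ℝ)
    (hv : DifferentiableAt ℝ v x) :
    pd i (fun y => c * v y) x = c * pd i v x := by
  unfold pd; rw [fderiv_const_mul hv]; simp

lemma pd_sum {i : Fin n} {s : Finset (Fin n)} {v : Fin n → (Fin n → ℝ) → ℝ}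
    (hv : ∀ j ∈ s, DifferentiableAt ℝ (v j) x) :
    pd i (fun y => ∑ j ∈ s, v j y) x = ∑ j ∈ s, pd i (v j) x := by
  unfold pd
  rw [fderiv_fun_sum hv]; simp

lemma pd_inv {i : Fin n} {v : (Fin n → ℝ) → ℝ}
    (hv : DifferentiableAt ℝ v x) (h0 : v x ≠ 0) :
    pd i (fun y => (v y)⁻¹) x = -pd i v x / (v x)^2 := by
  unfold pd
  rw [show (fun y => (v y)⁻¹) = Inv.inv ∘ v from rfl,
    fderiv_comp x (differentiableAt_inv h0) hv, fderiv_inv' h0]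
  simp [div_eq_mul_inv]
  ring

lemma diffAt_of_contDiffOn {m : ℕ} {v : (Fin n → ℝ) → ℝ} (hU : IsOpen U) (hx : x ∈ U)
    (hm : 1 ≤ m) (hv : ContDiffOn ℝ m v U) : DifferentiableAt ℝ v x :=
  ((hv.contDiffAt (hU.mem_nhds hx)).differentiableAt (by exact_mod_cast Nat.one_le_iff_ne_zero.mp hm))

lemma contDiffAt_of_contDiffOn {m : ℕ} {v : (Fin n → ℝ) → ℝ} (hU : IsOpen U) (hx : x ∈ U)
    (hv : ContDiffOn ℝ m v U) : ContDiffAt ℝ m v x :=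
  hv.contDiffAt (hU.mem_nhds hx)

lemma contDiffOn_pd {m : ℕ} {v : (Fin n → ℝ) → ℝ} (hU : IsOpen U)
    (hv : ContDiffOn ℝ (m+1) v U) (i : Fin n) :
    ContDiffOn ℝ m (fun y => pd i v y) U := by
  have h1 : ContDiffOn ℝ m (fderiv ℝ v) U := hv.fderiv_of_isOpen hU (by norm_cast)
  exact (ContinuousLinearMap.apply ℝ ℝ (Pi.single i 1 : Fin n → ℝ)).contDiff.comp_contDiffOn h1

lemma hess_eq_second {v : (Fin n → ℝ) → ℝ} (hv : ContDiffAt ℝ 2 v x) (i j : Fin n) :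
    hess v x i j = fderiv ℝ (fderiv ℝ v) x (Pi.single i 1) (Pi.single j 1) := by
  have hd : DifferentiableAt ℝ (fderiv ℝ v) x :=
    (hv.fderiv_right (m := 1) (by norm_num)).differentiableAt (by norm_num)
  show pd i (fun y => pd j v y) x = _
  unfold pd
  rw [fderiv_clm_apply hd (differentiableAt_const _)]
  simp

lemma hess_symm {v : (Fin n → ℝ) → ℝ} (hv : ContDiffAt ℝ 2 v x) (i j : Fin n) :
    hess v x i j = hess v x j i := by
  rw [hess_eq_second hv, hess_eq_second hv]
  exact hv.isSymmSndFDerivAt (by norm_num) _ _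

lemma diffAt_pd {v : (Fin n → ℝ) → ℝ} (hU : IsOpen U) (hx : x ∈ U)
    (hv : ContDiffOn ℝ 3 v U) (j : Fin n) :
    DifferentiableAt ℝ (fun y => pd j v y) x := by
  have h2 : ContDiffOn ℝ 2 (fun y => pd j v y) U :=
    contDiffOn_pd (m := 2) hU (by exact_mod_cast hv) j
  exact diffAt_of_contDiffOn (m := 2) hU hx (by norm_num) (by exact_mod_cast h2)

lemma contDiffAt_pd {v : (Fin n → ℝ) → ℝ} (hU : IsOpen U) (hx : x ∈ U)
    (hv : ContDiffOn ℝ 3 v U) (j : Fin n) :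
    ContDiffAt ℝ 2 (fun y => pd j v y) x := by
  have h2 : ContDiffOn ℝ 2 (fun y => pd j v y) U :=
    contDiffOn_pd (m := 2) hU (by exact_mod_cast hv) j
  exact contDiffAt_of_contDiffOn (m := 2) hU hx (by exact_mod_cast h2)

lemma diffAt_hess {v : (Fin n → ℝ) → ℝ} (hU : IsOpen U) (hx : x ∈ U)
    (hv : ContDiffOn ℝ 3 v U) (j k : Fin n) :
    DifferentiableAt ℝ (fun y => hess v y j k) x := by
  have h2 : ContDiffOn ℝ 2 (fun y => pd k v y) U :=
    contDiffOn_pd (m := 2) hU (by exact_mod_cast hv) k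
  have h1 : ContDiffOn ℝ 1 (fun y => pd j (fun z => pd k v z) y) U :=
    contDiffOn_pd (m := 1) hU (by exact_mod_cast h2) j
  exact diffAt_of_contDiffOn (m := 1) hU hx le_rfl (by exact_mod_cast h1)

lemma third_outer {v : (Fin n → ℝ) → ℝ} (hU : IsOpen U) (hx : x ∈ U)
    (hv : ContDiffOn ℝ 3 v U) (i j k : Fin n) :
    pd i (fun y => hess v y j k) x = pd j (fun y => hess v y i k) x := by
  have h2 : ContDiffAt ℝ 2 (fun y => pd k v y) x := contDiffAt_pd hU hx hv k
  exact hess_symm h2 i j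

lemma third_inner {v : (Fin n → ℝ) → ℝ} (hU : IsOpen U) (hx : x ∈ U)
    (hv : ContDiffOn ℝ 3 v U) (i j k : Fin n) :
    pd i (fun y => hess v y j k) x = pd i (fun y => hess v y k j) x := by
  apply pd_congr
  filter_upwards [hU.mem_nhds hx] with y hy
  exact hess_symm (by exact_mod_cast (hv.contDiffAt (hU.mem_nhds hy)).of_le (by norm_num)) j k

lemma diffAt_u_of_c3 {v : (Fin n → ℝ) → ℝ} (hU : IsOpen U) (hx : x ∈ U)
    (hv : ContDiffOn ℝ 3 v U) : DifferentiableAt ℝ v x := by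
  exact diffAt_of_contDiffOn (m := 3) hU hx (by norm_num) (by exact_mod_cast hv)

end Infra

section Comp

variable {n : ℕ} {U : Set (Fin n → ℝ)} {x : Fin n → ℝ}

/-- The explicit integrand for the `i`-th component of `X` on `U`. -/
noncomputable def Aint (n : ℕ) (f u : (Fin n → ℝ) → ℝ) (i : Fin n) (y : Fin n → ℝ) : ℝ :=
  f y * (2 * ∑ j, pd j u y * hess u y i j)
  + 2 / (n : ℝ) * (f y * pd i u y)
  - (∑ j, hess f y i j * (2 * (u y * pd j u y)))
  - 2 / (n : ℝ) * (u y * pd i f y)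
  - 2 * u y * (∑ j, hess u y i j * pd j f y)
  + 2 * (u y * u y) * (f y)⁻¹ * (∑ j, hess f y i j * pd j f y)

lemma X_eq_Aint (hU : IsOpen U) {f u : (Fin n → ℝ) → ℝ}
    (hf : ContDiffOn ℝ 3 f U) (hu : ContDiffOn ℝ 3 u U)
    {X : (Fin n → ℝ) → (Fin n → ℝ)}
    (hX : ∀ y, X y =
      f y • grad (fun z => dotp (grad u z) (grad u z)) y
      + (2 / (n : ℝ)) • (f y • grad u y)
      - (hess f y).mulVec (grad (fun z => (u z) ^ 2) y)
      - (2 / (n : ℝ)) • (u y • grad f y)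
      - (2 * u y) • ((hess u y).mulVec (grad f y))
      + (2 * (u y) ^ 2 / f y) • ((hess f y).mulVec (grad f y)))
    (i : Fin n) : ∀ y ∈ U, X y i = Aint n f u i y := by
  intro y hy
  have hDu : DifferentiableAt ℝ u y := diffAt_u_of_c3 hU hy hu
  have hg : ∀ j, DifferentiableAt ℝ (fun z => pd j u z) y := fun j => diffAt_pd hU hy hu j
  have h1 : grad (fun z => dotp (grad u z) (grad u z)) y i
      = 2 * ∑ j, pd j u y * hess u y i j := by
    show pd i (fun z => ∑ j, pd j u z * pd j u z) y = _
    rw [pd_sum (fun j _ => (hg j).fun_mul (hg j)), Finset.mul_sum]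
    refine Finset.sum_congr rfl fun j _ => ?_
    rw [pd_mul (hg j) (hg j)]
    show hess u y i j * pd j u y + pd j u y * hess u y i j = _
    ring
  have h2 : ∀ j, grad (fun z => (u z) ^ 2) y j = 2 * (u y * pd j u y) := by
    intro j
    show pd j (fun z => (u z) ^ 2) y = _
    have hsq : (fun z : Fin n → ℝ => (u z) ^ 2) = fun z => u z * u z := by
      funext z; ring
    rw [hsq, pd_mul hDu hDu]; ring
  rw [hX y]
  simp only [Pi.add_apply, Pi.sub_apply, Pi.smul_apply, smul_eq_mul, Matrix.mulVec,
    dotProduct, h1]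
  unfold Aint
  simp only [h2]
  have hpow : 2 * (u y) ^ 2 / f y = 2 * (u y * u y) * (f y)⁻¹ := by
    rw [div_eq_mul_inv]; ring
  rw [hpow]
  rfl

end Comp

section Eval

variable {n : ℕ} {U : Set (Fin n → ℝ)} {x : Fin n → ℝ}

lemma pd_hess {v : (Fin n → ℝ) → ℝ} (i j : Fin n) :
    pd i (fun y => pd j v y) x = hess v x i j := rfl

lemma pd_Aint (hU : IsOpen U) (hx : x ∈ U) {f u : (Fin n → ℝ) → ℝ}
    (hf : ContDiffOn ℝ 3 f U) (hu : ContDiffOn ℝ 3 u U) (hf0 : f x ≠ 0) (i : Fin n) :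
    pd i (Aint n f u i) x =
      (pd i f x * (2 * ∑ j, pd j u x * hess u x i j)
        + f x * (2 * ∑ j, (hess u x i j * hess u x i j
            + pd j u x * pd i (fun y => hess u y i j) x)))
      + 2 / (n : ℝ) * (pd i f x * pd i u x + f x * hess u x i i)
      - (∑ j, (pd i (fun y => hess f y i j) x * (2 * (u x * pd j u x))
          + hess f x i j * (2 * (pd i u x * pd j u x + u x * hess u x i j))))
      - 2 / (n : ℝ) * (pd i u x * pd i f x + u x * hess f x i i)
      - (2 * pd i u x * (∑ j, hess u x i j * pd j f x)
          + 2 * u x * (∑ j, (pd i (fun y => hess u y i j) x * pd j f x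
              + hess u x i j * hess f x i j)))
      + ((2 * (pd i u x * u x + u x * pd i u x) * (f x)⁻¹
            + 2 * (u x * u x) * (-pd i f x / (f x) ^ 2)) * (∑ j, hess f x i j * pd j f x)
          + 2 * (u x * u x) * (f x)⁻¹ * (∑ j, (pd i (fun y => hess f y i j) x * pd j f x
              + hess f x i j * hess f x i j))) := by
  have hDf : DifferentiableAt ℝ f x := diffAt_u_of_c3 hU hx hf
  have hDu : DifferentiableAt ℝ u x := diffAt_u_of_c3 hU hx hu
  have hgu : ∀ j, DifferentiableAt ℝ (fun y => pd j u y) x := fun j => diffAt_pd hU hx hu j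
  have hgf : ∀ j, DifferentiableAt ℝ (fun y => pd j f y) x := fun j => diffAt_pd hU hx hf j
  have hhu : ∀ j k, DifferentiableAt ℝ (fun y => hess u y j k) x :=
    fun j k => diffAt_hess hU hx hu j k
  have hhf : ∀ j k, DifferentiableAt ℝ (fun y => hess f y j k) x :=
    fun j k => diffAt_hess hU hx hf j k
  have hSu1 : DifferentiableAt ℝ (fun y => ∑ j, pd j u y * hess u y i j) x :=
    DifferentiableAt.fun_sum fun j _ => (hgu j).fun_mul (hhu i j)
  have hSu2 : DifferentiableAt ℝ (fun y => ∑ j, hess u y i j * pd j f y) x :=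
    DifferentiableAt.fun_sum fun j _ => (hhu i j).fun_mul (hgf j)
  have hSf2 : DifferentiableAt ℝ (fun y => ∑ j, hess f y i j * pd j f y) x :=
    DifferentiableAt.fun_sum fun j _ => (hhf i j).fun_mul (hgf j)
  have hD1 : DifferentiableAt ℝ (fun y => f y * (2 * ∑ j, pd j u y * hess u y i j)) x :=
    hDf.fun_mul (hSu1.const_mul 2)
  have hD2 : DifferentiableAt ℝ (fun y => 2 / (n : ℝ) * (f y * pd i u y)) x :=
    (hDf.fun_mul (hgu i)).const_mul _
  have hD3 : DifferentiableAt ℝ (fun y => ∑ j, hess f y i j * (2 * (u y * pd j u y))) x :=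
    DifferentiableAt.fun_sum fun j _ => (hhf i j).fun_mul ((hDu.fun_mul (hgu j)).const_mul 2)
  have hD4 : DifferentiableAt ℝ (fun y => 2 / (n : ℝ) * (u y * pd i f y)) x :=
    (hDu.fun_mul (hgf i)).const_mul _
  have hD5 : DifferentiableAt ℝ (fun y => 2 * u y * (∑ j, hess u y i j * pd j f y)) x :=
    (hDu.const_mul 2).fun_mul hSu2
  have hD6 : DifferentiableAt ℝ
      (fun y => 2 * (u y * u y) * (f y)⁻¹ * (∑ j, hess f y i j * pd j f y)) x :=
    (((hDu.fun_mul hDu).const_mul 2).fun_mul (hDf.fun_inv hf0)).fun_mul hSf2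
  have hT1 : pd i (fun y => f y * (2 * ∑ j, pd j u y * hess u y i j)) x =
      pd i f x * (2 * ∑ j, pd j u x * hess u x i j)
        + f x * (2 * ∑ j, (hess u x i j * hess u x i j
            + pd j u x * pd i (fun y => hess u y i j) x)) := by
    rw [pd_mul hDf (hSu1.const_mul 2), pd_cmul 2 hSu1,
      pd_sum (fun j _ => (hgu j).fun_mul (hhu i j))]
    have hj : ∀ j : Fin n, pd i (fun y => pd j u y * hess u y i j) x
        = hess u x i j * hess u x i j + pd j u x * pd i (fun y => hess u y i j) x := by
      intro j
      rw [pd_mul (hgu j) (hhu i j), pd_hess]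
    simp only [hj]
  have hT2 : pd i (fun y => 2 / (n : ℝ) * (f y * pd i u y)) x =
      2 / (n : ℝ) * (pd i f x * pd i u x + f x * hess u x i i) := by
    rw [pd_cmul _ (hDf.fun_mul (hgu i)), pd_mul hDf (hgu i), pd_hess]
  have hT3 : pd i (fun y => ∑ j, hess f y i j * (2 * (u y * pd j u y))) x =
      ∑ j, (pd i (fun y => hess f y i j) x * (2 * (u x * pd j u x))
          + hess f x i j * (2 * (pd i u x * pd j u x + u x * hess u x i j))) := by
    rw [pd_sum (fun j _ => (hhf i j).fun_mul ((hDu.fun_mul (hgu j)).const_mul 2))]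
    refine Finset.sum_congr rfl fun j _ => ?_
    rw [pd_mul (hhf i j) ((hDu.fun_mul (hgu j)).const_mul 2), pd_cmul 2 (hDu.fun_mul (hgu j)),
      pd_mul hDu (hgu j), pd_hess]
  have hT4 : pd i (fun y => 2 / (n : ℝ) * (u y * pd i f y)) x =
      2 / (n : ℝ) * (pd i u x * pd i f x + u x * hess f x i i) := by
    rw [pd_cmul _ (hDu.fun_mul (hgf i)), pd_mul hDu (hgf i), pd_hess]
  have hT5 : pd i (fun y => 2 * u y * (∑ j, hess u y i j * pd j f y)) x =
      2 * pd i u x * (∑ j, hess u x i j * pd j f x)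
        + 2 * u x * (∑ j, (pd i (fun y => hess u y i j) x * pd j f x
            + hess u x i j * hess f x i j)) := by
    rw [pd_mul (hDu.const_mul 2) hSu2, pd_cmul 2 hDu,
      pd_sum (fun j _ => (hhu i j).fun_mul (hgf j))]
    have hj : ∀ j : Fin n, pd i (fun y => hess u y i j * pd j f y) x
        = pd i (fun y => hess u y i j) x * pd j f x + hess u x i j * hess f x i j := by
      intro j
      rw [pd_mul (hhu i j) (hgf j), pd_hess]
    simp only [hj]
  have hT6 : pd i (fun y => 2 * (u y * u y) * (f y)⁻¹ * (∑ j, hess f y i j * pd j f y)) x =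
      (2 * (pd i u x * u x + u x * pd i u x) * (f x)⁻¹
          + 2 * (u x * u x) * (-pd i f x / (f x) ^ 2)) * (∑ j, hess f x i j * pd j f x)
        + 2 * (u x * u x) * (f x)⁻¹ * (∑ j, (pd i (fun y => hess f y i j) x * pd j f x
            + hess f x i j * hess f x i j)) := by
    rw [pd_mul (((hDu.fun_mul hDu).const_mul 2).fun_mul (hDf.fun_inv hf0)) hSf2,
      pd_mul ((hDu.fun_mul hDu).const_mul 2) (hDf.fun_inv hf0),
      pd_cmul 2 (hDu.fun_mul hDu), pd_mul hDu hDu, pd_inv hDf hf0,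
      pd_sum (fun j _ => (hhf i j).fun_mul (hgf j))]
    have hj : ∀ j : Fin n, pd i (fun y => hess f y i j * pd j f y) x
        = pd i (fun y => hess f y i j) x * pd j f x + hess f x i j * hess f x i j := by
      intro j
      rw [pd_mul (hhf i j) (hgf j), pd_hess]
    simp only [hj]
  unfold Aint
  rw [pd_add ((((hD1.fun_add hD2).fun_sub hD3).fun_sub hD4).fun_sub hD5) hD6,
    pd_sub (((hD1.fun_add hD2).fun_sub hD3).fun_sub hD4) hD5,
    pd_sub ((hD1.fun_add hD2).fun_sub hD3) hD4,
    pd_sub (hD1.fun_add hD2) hD3,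
    pd_add hD1 hD2,
    hT1, hT2, hT3, hT4, hT5, hT6]

end Eval

section Contract

variable {n : ℕ} {U : Set (Fin n → ℝ)} {x : Fin n → ℝ}

lemma lap_pd_swap {v : (Fin n → ℝ) → ℝ} (hU : IsOpen U) (hx : x ∈ U)
    (hv : ContDiffOn ℝ 3 v U) (j : Fin n) :
    pd j (fun y => lap v y) x = ∑ i, pd i (fun y => hess v y i j) x := by
  have hhv : ∀ a b, DifferentiableAt ℝ (fun y => hess v y a b) x :=
    fun a b => diffAt_hess hU hx hv a b
  show pd j (fun y => ∑ i, hess v y i i) x = _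
  rw [pd_sum (fun i _ => hhv i i)]
  exact Finset.sum_congr rfl fun i _ => by
    rw [third_outer hU hx hv j i i, third_inner hU hx hv i j i]

lemma contraction (hU : IsOpen U) (hx : x ∈ U) {f u : (Fin n → ℝ) → ℝ}
    (hf : ContDiffOn ℝ 3 f U) (hu : ContDiffOn ℝ 3 u U) (hf0 : ∀ y ∈ U, f y ≠ 0)
    (heq : ∀ y ∈ U, lap u y = -1 + (lap f y / f y) * u y) (j : Fin n) :
    ∑ i, pd i (fun y => hess u y i j) x =
      ((∑ i, pd i (fun y => hess f y i j) x) * (f x)⁻¹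
          + lap f x * (-pd j f x / (f x) ^ 2)) * u x
        + lap f x * (f x)⁻¹ * pd j u x := by
  have hDf : DifferentiableAt ℝ f x := diffAt_u_of_c3 hU hx hf
  have hDu : DifferentiableAt ℝ u x := diffAt_u_of_c3 hU hx hu
  have hf0x : f x ≠ 0 := hf0 x hx
  have hhf : ∀ a b, DifferentiableAt ℝ (fun y => hess f y a b) x :=
    fun a b => diffAt_hess hU hx hf a b
  have hDlf : DifferentiableAt ℝ (fun y => lap f y) x := by
    exact DifferentiableAt.fun_sum fun i _ => hhf i i
  have hinv : DifferentiableAt ℝ (fun y => (f y)⁻¹) x := hDf.fun_inv hf0x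
  have h1 : pd j (fun y => lap u y) x = ∑ i, pd i (fun y => hess u y i j) x :=
    lap_pd_swap hU hx hu j
  have h2 : pd j (fun y => lap u y) x
      = pd j (fun y => -1 + lap f y * (f y)⁻¹ * u y) x := by
    apply pd_congr
    filter_upwards [hU.mem_nhds hx] with y hy
    rw [heq y hy, div_eq_mul_inv]
  have h3 : pd j (fun y => -1 + lap f y * (f y)⁻¹ * u y) x =
      ((∑ i, pd i (fun y => hess f y i j) x) * (f x)⁻¹
          + lap f x * (-pd j f x / (f x) ^ 2)) * u x
        + lap f x * (f x)⁻¹ * pd j u x := by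
    rw [pd_add (differentiableAt_const _) ((hDlf.fun_mul hinv).fun_mul hDu), pd_const,
      pd_mul (hDlf.fun_mul hinv) hDu, pd_mul hDlf hinv, pd_inv hDf hf0x,
      lap_pd_swap hU hx hf j]
    ring
  rw [← h1, h2, h3]

end Contract

section Assemble
variable {n : ℕ}

/-- antisymmetric double sums vanish -/
lemma sum_antisym (χ : Fin n → Fin n → ℝ) :
    ∑ i, ∑ j, (χ i j - χ j i) = 0 := by
  have h : ∑ i, ∑ j, χ j i = ∑ i, ∑ j, χ i j := Finset.sum_comm
  simp [Finset.sum_sub_distrib, h]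

set_option maxHeartbeats 4000000 in
lemma assemble {n : ℕ} (hn : (n:ℝ) ≠ 0) (F Uu L Lu : ℝ) (hF : F ≠ 0)
    (gu gf : Fin n → ℝ) (Hu Hf cu cf : Fin n → Fin n → ℝ)
    (hHu : ∀ i j, Hu i j = Hu j i) (hHf : ∀ i j, Hf i j = Hf j i)
    (hLu : Lu = ∑ i, Hu i i) (hL : L = ∑ i, Hf i i)
    (hPDE : Lu = -1 + L / F * Uu)
    (hcontr : ∀ j, ∑ i, cu i j =
      ((∑ i, cf i j) * F⁻¹ + L * (-gf j / F ^ 2)) * Uu + L * F⁻¹ * gu j) :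
    ∑ i, ((gf i * (2 * ∑ j, gu j * Hu i j)
        + F * (2 * ∑ j, (Hu i j * Hu i j + gu j * cu i j)))
      + 2 / (n : ℝ) * (gf i * gu i + F * Hu i i)
      - (∑ j, (cf i j * (2 * (Uu * gu j))
          + Hf i j * (2 * (gu i * gu j + Uu * Hu i j))))
      - 2 / (n : ℝ) * (gu i * gf i + Uu * Hf i i)
      - (2 * gu i * (∑ j, Hu i j * gf j)
          + 2 * Uu * (∑ j, (cu i j * gf j + Hu i j * Hf i j)))
      + ((2 * (gu i * Uu + Uu * gu i) * F⁻¹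
            + 2 * (Uu * Uu) * (-gf i / F ^ 2)) * (∑ j, Hf i j * gf j)
          + 2 * (Uu * Uu) * F⁻¹ * (∑ j, (cf i j * gf j + Hf i j * Hf i j)))) =
    2 * F * (∑ i, ∑ j, (Hu i j - Lu / (n : ℝ) * (if i = j then (1:ℝ) else 0)
        - Uu / F * (Hf i j - L / (n : ℝ) * (if i = j then (1:ℝ) else 0))) ^ 2)
    + 2 * ∑ i, ((gu i - Uu / F * gf i)
        * (∑ j, (L * (if i = j then (1:ℝ) else 0) - Hf i j) * (gu j - Uu / F * gf j))) := by
  classical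
  -- per-i splitting
  have h1 : ∀ i : Fin n,
      (gf i * (2 * ∑ j, gu j * Hu i j)
        + F * (2 * ∑ j, (Hu i j * Hu i j + gu j * cu i j)))
      + 2 / (n : ℝ) * (gf i * gu i + F * Hu i i)
      - (∑ j, (cf i j * (2 * (Uu * gu j))
          + Hf i j * (2 * (gu i * gu j + Uu * Hu i j))))
      - 2 / (n : ℝ) * (gu i * gf i + Uu * Hf i i)
      - (2 * gu i * (∑ j, Hu i j * gf j)
          + 2 * Uu * (∑ j, (cu i j * gf j + Hu i j * Hf i j)))
      + ((2 * (gu i * Uu + Uu * gu i) * F⁻¹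
            + 2 * (Uu * Uu) * (-gf i / F ^ 2)) * (∑ j, Hf i j * gf j)
          + 2 * (Uu * Uu) * F⁻¹ * (∑ j, (cf i j * gf j + Hf i j * Hf i j)))
      = (∑ j, (2 * gf i * gu j * Hu i j + 2 * F * Hu i j * Hu i j
          - 2 * Hf i j * gu i * gu j - 2 * Uu * Hf i j * Hu i j
          - 2 * gu i * Hu i j * gf j - 2 * Uu * Hu i j * Hf i j
          + 2 * Uu * F⁻¹ * gu i * Hf i j * gf j + 2 * Uu * F⁻¹ * gu i * Hf i j * gf j
          - 2 * (Uu * Uu) / F ^ 2 * gf i * Hf i j * gf j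
          + 2 * (Uu * Uu) * F⁻¹ * Hf i j * Hf i j))
      + ((∑ j, (2 * F * gu j - 2 * Uu * gf j) * cu i j)
          + (∑ j, (- (2 * Uu * gu j) + 2 * (Uu * Uu) * F⁻¹ * gf j) * cf i j))
      + 2 / (n : ℝ) * (F * Hu i i - Uu * Hf i i) := by
    intro i
    simp only [mul_add, add_mul, sub_mul, mul_sub, neg_mul, mul_neg, div_eq_mul_inv,
      Finset.mul_sum, Finset.sum_mul, Finset.sum_add_distrib, Finset.sum_sub_distrib,
      Finset.sum_neg_distrib]
    simp only [mul_comm, mul_left_comm, mul_assoc]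
    ring
  rw [Finset.sum_congr rfl (fun i _ => h1 i)]
  rw [Finset.sum_add_distrib, Finset.sum_add_distrib]
  -- the trace terms
  have h3 : ∑ i : Fin n, 2 / (n : ℝ) * (F * Hu i i - Uu * Hf i i)
      = 2 / (n : ℝ) * (F * Lu - Uu * L) := by
    rw [hLu, hL]
    simp only [mul_sub, Finset.mul_sum, Finset.sum_sub_distrib]
  rw [h3]
  -- the third-derivative terms, via the contracted Bianchi/PDE identity
  have h4 : ∑ i : Fin n, ((∑ j, (2 * F * gu j - 2 * Uu * gf j) * cu i j)
          + (∑ j, (- (2 * Uu * gu j) + 2 * (Uu * Uu) * F⁻¹ * gf j) * cf i j))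
      = ∑ j : Fin n, (2 * L * (gu j * gu j) - 2 * Uu * L * F⁻¹ * (gu j * gf j)
          - 2 * Uu * L * F⁻¹ * (gu j * gf j)
          + 2 * (Uu * Uu) * L * (F⁻¹ * F⁻¹) * (gf j * gf j)) := by
    rw [Finset.sum_add_distrib, Finset.sum_comm, Finset.sum_comm (f := fun i j =>
      (- (2 * Uu * gu j) + 2 * (Uu * Uu) * F⁻¹ * gf j) * cf i j), ← Finset.sum_add_distrib]
    refine Finset.sum_congr rfl fun j _ => ?_
    rw [← Finset.mul_sum, ← Finset.mul_sum, hcontr j]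
    field_simp
    ring
  rw [h4]
  -- symmetrize the quadratic double sum
  have h5 : ∑ i : Fin n, ∑ j : Fin n,
        (2 * gf i * gu j * Hu i j + 2 * F * Hu i j * Hu i j
          - 2 * Hf i j * gu i * gu j - 2 * Uu * Hf i j * Hu i j
          - 2 * gu i * Hu i j * gf j - 2 * Uu * Hu i j * Hf i j
          + 2 * Uu * F⁻¹ * gu i * Hf i j * gf j + 2 * Uu * F⁻¹ * gu i * Hf i j * gf j
          - 2 * (Uu * Uu) / F ^ 2 * gf i * Hf i j * gf j
          + 2 * (Uu * Uu) * F⁻¹ * Hf i j * Hf i j)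
      = ∑ i : Fin n, ∑ j : Fin n,
        (2 * F * Hu i j * Hu i j
          - 2 * Hf i j * gu i * gu j - 4 * Uu * Hf i j * Hu i j
          + 2 * Uu * F⁻¹ * gu i * Hf i j * gf j + 2 * Uu * F⁻¹ * gf i * Hf i j * gu j
          - 2 * (Uu * Uu) / F ^ 2 * gf i * Hf i j * gf j
          + 2 * (Uu * Uu) * F⁻¹ * Hf i j * Hf i j) := by
    have key : ∀ i j : Fin n,
        (2 * gf i * gu j * Hu i j + 2 * F * Hu i j * Hu i j
          - 2 * Hf i j * gu i * gu j - 2 * Uu * Hf i j * Hu i j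
          - 2 * gu i * Hu i j * gf j - 2 * Uu * Hu i j * Hf i j
          + 2 * Uu * F⁻¹ * gu i * Hf i j * gf j + 2 * Uu * F⁻¹ * gu i * Hf i j * gf j
          - 2 * (Uu * Uu) / F ^ 2 * gf i * Hf i j * gf j
          + 2 * (Uu * Uu) * F⁻¹ * Hf i j * Hf i j)
        - (2 * F * Hu i j * Hu i j
          - 2 * Hf i j * gu i * gu j - 4 * Uu * Hf i j * Hu i j
          + 2 * Uu * F⁻¹ * gu i * Hf i j * gf j + 2 * Uu * F⁻¹ * gf i * Hf i j * gu j
          - 2 * (Uu * Uu) / F ^ 2 * gf i * Hf i j * gf j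
          + 2 * (Uu * Uu) * F⁻¹ * Hf i j * Hf i j)
        = (2 * gf i * gu j * Hu i j + 2 * Uu * F⁻¹ * gu i * Hf i j * gf j)
          - (2 * gf j * gu i * Hu j i + 2 * Uu * F⁻¹ * gu j * Hf j i * gf i) := by
      intro i j
      rw [hHu i j, hHf i j]
      ring
    have hz := sum_antisym (fun i j =>
      2 * gf i * gu j * Hu i j + 2 * Uu * F⁻¹ * gu i * Hf i j * gf j)
    have : ∑ i : Fin n, ∑ j : Fin n,
        ((2 * gf i * gu j * Hu i j + 2 * F * Hu i j * Hu i j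
          - 2 * Hf i j * gu i * gu j - 2 * Uu * Hf i j * Hu i j
          - 2 * gu i * Hu i j * gf j - 2 * Uu * Hu i j * Hf i j
          + 2 * Uu * F⁻¹ * gu i * Hf i j * gf j + 2 * Uu * F⁻¹ * gu i * Hf i j * gf j
          - 2 * (Uu * Uu) / F ^ 2 * gf i * Hf i j * gf j
          + 2 * (Uu * Uu) * F⁻¹ * Hf i j * Hf i j)
        - (2 * F * Hu i j * Hu i j
          - 2 * Hf i j * gu i * gu j - 4 * Uu * Hf i j * Hu i j
          + 2 * Uu * F⁻¹ * gu i * Hf i j * gf j + 2 * Uu * F⁻¹ * gf i * Hf i j * gu j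
          - 2 * (Uu * Uu) / F ^ 2 * gf i * Hf i j * gf j
          + 2 * (Uu * Uu) * F⁻¹ * Hf i j * Hf i j)) = 0 := by
      rw [Finset.sum_congr rfl (fun i _ => Finset.sum_congr rfl (fun j _ => key i j))]
      exact hz
    have := this
    simp only [Finset.sum_sub_distrib] at this
    linarith
  rw [h5]
  -- expand the Frobenius square with the identity-matrix shifts
  have hR1 : ∀ i j : Fin n,
      (Hu i j - Lu / (n : ℝ) * (if i = j then (1:ℝ) else 0)
        - Uu / F * (Hf i j - L / (n : ℝ) * (if i = j then (1:ℝ) else 0))) ^ 2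
      = (Hu i j - Uu / F * Hf i j) ^ 2
        + (if i = j then
            (2 * (Uu / F * (L / (n : ℝ)) - Lu / (n : ℝ)) * (Hu i j - Uu / F * Hf i j)
              + (Uu / F * (L / (n : ℝ)) - Lu / (n : ℝ)) ^ 2) else 0) := by
    intro i j
    by_cases h : i = j <;> simp [h] <;> ring
  have hR2 : ∑ i : Fin n, ∑ j : Fin n,
      (Hu i j - Lu / (n : ℝ) * (if i = j then (1:ℝ) else 0)
        - Uu / F * (Hf i j - L / (n : ℝ) * (if i = j then (1:ℝ) else 0))) ^ 2
      = (∑ i : Fin n, ∑ j : Fin n, (Hu i j - Uu / F * Hf i j) ^ 2)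
        + (2 * (Uu / F * (L / (n : ℝ)) - Lu / (n : ℝ)) * (Lu - Uu / F * L)
            + (n : ℝ) * (Uu / F * (L / (n : ℝ)) - Lu / (n : ℝ)) ^ 2) := by
    simp only [hR1, Finset.sum_add_distrib, Finset.sum_ite_eq, Finset.mem_univ, if_true]
    rw [hLu, hL]
    simp only [Finset.sum_add_distrib, Finset.sum_const, Finset.card_univ, Fintype.card_fin,
      nsmul_eq_mul, mul_sub, Finset.mul_sum, Finset.sum_sub_distrib]
  rw [hR2]
  have hbase : 2 * F * ((∑ i : Fin n, ∑ j : Fin n, (Hu i j - Uu / F * Hf i j) ^ 2)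
        + (2 * (Uu / F * (L / (n : ℝ)) - Lu / (n : ℝ)) * (Lu - Uu / F * L)
            + (n : ℝ) * (Uu / F * (L / (n : ℝ)) - Lu / (n : ℝ)) ^ 2))
      = (∑ i : Fin n, ∑ j : Fin n, (2 * F * Hu i j * Hu i j - 4 * Uu * Hf i j * Hu i j
          + 2 * (Uu * Uu) * F⁻¹ * Hf i j * Hf i j))
        + 2 * F * (2 * (Uu / F * (L / (n : ℝ)) - Lu / (n : ℝ)) * (Lu - Uu / F * L)
            + (n : ℝ) * (Uu / F * (L / (n : ℝ)) - Lu / (n : ℝ)) ^ 2) := by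
    rw [mul_add]
    congr 1
    rw [Finset.mul_sum]
    refine Finset.sum_congr rfl fun i _ => ?_
    rw [Finset.mul_sum]
    refine Finset.sum_congr rfl fun j _ => ?_
    field_simp
    ring
  rw [hbase]
  have hR3 : ∀ i : Fin n, (∑ j, (L * (if i = j then (1:ℝ) else 0) - Hf i j)
        * (gu j - Uu / F * gf j))
      = L * (gu i - Uu / F * gf i) - ∑ j, Hf i j * (gu j - Uu / F * gf j) := by
    intro i
    simp [sub_mul, mul_ite, mul_one, mul_zero, ite_mul, zero_mul,
      Finset.sum_sub_distrib, Finset.sum_ite_eq, Finset.mem_univ, if_true]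
  rw [Finset.sum_congr rfl (fun i (_ : i ∈ Finset.univ) => by rw [hR3 i] :
    ∀ i ∈ Finset.univ, (gu i - Uu / F * gf i)
        * (∑ j, (L * (if i = j then (1:ℝ) else 0) - Hf i j) * (gu j - Uu / F * gf j))
      = (gu i - Uu / F * gf i)
        * (L * (gu i - Uu / F * gf i) - ∑ j, Hf i j * (gu j - Uu / F * gf j)))]
  rw [hPDE]
  have hscal : 2 / (n:ℝ) * (F * (-1 + L / F * Uu) - Uu * L)
      = 2 * F * (2 * (Uu / F * (L / (n : ℝ)) - (-1 + L / F * Uu) / (n : ℝ))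
            * ((-1 + L / F * Uu) - Uu / F * L)
          + (n : ℝ) * (Uu / F * (L / (n : ℝ)) - (-1 + L / F * Uu) / (n : ℝ)) ^ 2) := by
    field_simp
    ring
  rw [hscal]
  simp only [mul_add, add_mul, sub_mul, mul_sub, neg_mul, mul_neg, div_eq_mul_inv, pow_two,
    mul_inv, Finset.mul_sum, Finset.sum_mul, Finset.sum_add_distrib, Finset.sum_sub_distrib,
    Finset.sum_neg_distrib]
  simp only [mul_comm, mul_left_comm, mul_assoc]
  ring

end Assemble


theorem stmt0 {n : ℕ} (hn : 2 ≤ n) {U : Set (Fin n → ℝ)} (hU : IsOpen U)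
    (f u : (Fin n → ℝ) → ℝ)
    (hf : ContDiffOn ℝ 3 f U) (hfpos : ∀ x ∈ U, 0 < f x)
    (hu : ContDiffOn ℝ 3 u U)
    (heq : ∀ x ∈ U, lap u x = -1 + (lap f x / f x) * u x)
    (X : (Fin n → ℝ) → (Fin n → ℝ))
    (hX : ∀ y, X y =
      f y • grad (fun z => dotp (grad u z) (grad u z)) y
      + (2 / (n : ℝ)) • (f y • grad u y)
      - (hess f y).mulVec (grad (fun z => (u z) ^ 2) y)
      - (2 / (n : ℝ)) • (u y • grad f y)
      - (2 * u y) • ((hess u y).mulVec (grad f y))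
      + (2 * (u y) ^ 2 / f y) • ((hess f y).mulVec (grad f y))) :
    ∀ x ∈ U,
      divg X x =
        2 * f x *
          frobSq (hess u x - (lap u x / (n : ℝ)) • (1 : Matrix (Fin n) (Fin n) ℝ)
            - (u x / f x) • (hess f x - (lap f x / (n : ℝ)) • (1 : Matrix (Fin n) (Fin n) ℝ)))
        + 2 * dotp (grad u x - (u x / f x) • grad f x)
            ((lap f x • (1 : Matrix (Fin n) (Fin n) ℝ) - hess f x).mulVec
              (grad u x - (u x / f x) • grad f x)) := by
  intro x hx
  have hn0 : (n : ℝ) ≠ 0 := Nat.cast_ne_zero.mpr (by omega)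
  have hfx : f x ≠ 0 := (hfpos x hx).ne'
  have hf0 : ∀ y ∈ U, f y ≠ 0 := fun y hy => (hfpos y hy).ne'
  have hHu : ∀ i j, hess u x i j = hess u x j i := fun i j =>
    hess_symm (by exact_mod_cast (hu.contDiffAt (hU.mem_nhds hx)).of_le (by norm_num)) i j
  have hHf : ∀ i j, hess f x i j = hess f x j i := fun i j =>
    hess_symm (by exact_mod_cast (hf.contDiffAt (hU.mem_nhds hx)).of_le (by norm_num)) i j
  have hstep : divg X x = ∑ i, pd i (Aint n f u i) x := by
    unfold divg
    exact Finset.sum_congr rfl fun i _ => pd_congr (by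
      filter_upwards [hU.mem_nhds hx] with y hy using X_eq_Aint hU hf hu hX i y hy)
  rw [hstep, Finset.sum_congr rfl (fun i _ => pd_Aint hU hx hf hu hfx i)]
  have hRHS :
      2 * f x *
          frobSq (hess u x - (lap u x / (n : ℝ)) • (1 : Matrix (Fin n) (Fin n) ℝ)
            - (u x / f x) • (hess f x - (lap f x / (n : ℝ)) • (1 : Matrix (Fin n) (Fin n) ℝ)))
        + 2 * dotp (grad u x - (u x / f x) • grad f x)
            ((lap f x • (1 : Matrix (Fin n) (Fin n) ℝ) - hess f x).mulVec
              (grad u x - (u x / f x) • grad f x)) =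
      2 * f x * (∑ i, ∑ j, (hess u x i j
          - lap u x / (n : ℝ) * (if i = j then (1:ℝ) else 0)
          - u x / f x * (hess f x i j
              - lap f x / (n : ℝ) * (if i = j then (1:ℝ) else 0))) ^ 2)
      + 2 * ∑ i, ((pd i u x - u x / f x * pd i f x)
          * (∑ j, (lap f x * (if i = j then (1:ℝ) else 0) - hess f x i j)
              * (pd j u x - u x / f x * pd j f x))) := by
    simp only [frobSq, dotp, Matrix.sub_apply, Matrix.smul_apply, smul_eq_mul,
      Matrix.one_apply, Matrix.mulVec, dotProduct, Pi.sub_apply, Pi.smul_apply]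
    rfl
  rw [hRHS]
  exact assemble hn0 (f x) (u x) (lap f x) (lap u x) hfx
    (fun j => pd j u x) (fun j => pd j f x)
    (fun i j => hess u x i j) (fun i j => hess f x i j)
    (fun i j => pd i (fun y => hess u y i j) x)
    (fun i j => pd i (fun y => hess f y i j) x)
    hHu hHf rfl rfl (heq x hx)
    (fun j => contraction hU hx hf hu hf0 heq j)
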